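/- Let $d = 3$, $\rho : \mathbb{T}^3 \to [0,\rho^*]$ measurable, and $v \in H^2(\mathbb{T}^3)$ a vector field. Then for every $\varepsilon > 0$ there is a constant $C_\varepsilon$ (independent of $\rho, v$) such that $\int_{\mathbb{T}^3} \rho\, |v \cdot \nabla v|^2\,dx \leq \varepsilon\, \|\nabla^2 v\|_{L^2}^2 + C_\varepsilon\, (\rho^*)^3\, \varepsilon^{-3}\, \|\sqrt{\rho}\, v\|_{L^2}^2\, \|\nabla v\|_{L^2}^8$. -/

import Mathlib

open MeasureTheory

/-- Hölder (2,2) for nonnegative real functions, in `sqrt` form. -/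
lemma holder22 {Ω : Type} [MeasurableSpace Ω] {μ : Measure Ω} {f g : Ω → ℝ}
    (hf0 : ∀ x, 0 ≤ f x) (hg0 : ∀ x, 0 ≤ g x)
    (hfm : AEStronglyMeasurable f μ) (hgm : AEStronglyMeasurable g μ)
    (hf2 : Integrable (fun x => f x ^ 2) μ) (hg2 : Integrable (fun x => g x ^ 2) μ) :
    ∫ x, f x * g x ∂μ ≤ Real.sqrt (∫ x, f x ^ 2 ∂μ) * Real.sqrt (∫ x, g x ^ 2 ∂μ) := by
  have hpq : Real.HolderConjugate 2 2 := Real.HolderConjugate.two_two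
  have h2 : ENNReal.ofReal (2:ℝ) = 2 := by norm_num
  have hf : MemLp f (ENNReal.ofReal (2:ℝ)) μ := by
    rw [h2]; exact (memLp_two_iff_integrable_sq hfm).2 hf2
  have hg : MemLp g (ENNReal.ofReal (2:ℝ)) μ := by
    rw [h2]; exact (memLp_two_iff_integrable_sq hgm).2 hg2
  have := integral_mul_le_Lp_mul_Lq_of_nonneg hpq (ae_of_all _ hf0) (ae_of_all _ hg0) hf hg
  simp only [show (2:ℝ) = ((2:ℕ):ℝ) by norm_num, Real.rpow_natCast] at this
  rw [Real.sqrt_eq_rpow, Real.sqrt_eq_rpow]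
  exact this

lemma young_aux {k t ε : ℝ} (hk : 0 ≤ k) (ht : 0 ≤ t) (hε : 0 < ε) :
    k * t ^ 3 ≤ ε * t ^ 4 + ε⁻¹ ^ 3 * k ^ 4 := by
  have h1 : (ε * t) ^ 3 * k ≤ (ε * t) ^ 4 + k ^ 4 := by
    rcases le_total (ε * t) k with h | h
    · have := mul_le_mul_of_nonneg_right (pow_le_pow_left₀ (mul_nonneg hε.le ht) h 3) hk
      nlinarith [pow_nonneg hk 4, pow_nonneg (mul_nonneg hε.le ht) 4]
    · have := mul_le_mul_of_nonneg_left h (pow_nonneg (mul_nonneg hε.le ht) 3)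
      nlinarith [pow_nonneg hk 4, pow_nonneg (mul_nonneg hε.le ht) 4]
  have hε3 : (0:ℝ) < ε ^ 3 := by positivity
  have key : ε ^ 3 * (k * t ^ 3) ≤ ε ^ 3 * (ε * t ^ 4 + ε⁻¹ ^ 3 * k ^ 4) := by
    have h2 : ε ^ 3 * (ε * t ^ 4 + ε⁻¹ ^ 3 * k ^ 4) = ε ^ 4 * t ^ 4 + k ^ 4 := by
      field_simp
    rw [h2]; nlinarith [h1]
  exact le_of_mul_le_mul_left key hε3

set_option maxHeartbeats 1000000 in
/-- 3D convection-term estimate: for `0 ≤ ρ ≤ ρ*` and `v ∈ H²(T³)` (the torus being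
modelled as a probability space, with gradient `Dv` and Hessian `D2v` linked to `v`
through the Sobolev embeddings `‖v‖₆ ≤ CS ‖∇v‖₂`, `‖∇v‖₆ ≤ CS ‖∇²v‖₂`),
`∫ ρ |v·∇v|² ≤ ε ‖∇²v‖₂² + C (ρ*)³ ε⁻³ ‖√ρ v‖₂² ‖∇v‖₂⁸`. -/
theorem stmt12 (CS : ℝ) (hCS : 0 < CS) :
    ∃ C > 0,
      ∀ {Ω : Type} [inst : MeasurableSpace Ω] (μ : Measure Ω)
        [inst2 : IsProbabilityMeasure μ]
        {F : Type} [instF : NormedAddCommGroup F]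
        (ρ : Ω → ℝ) (ρs : ℝ)
        (v : Ω → EuclideanSpace ℝ (Fin 3))
        (Dv : Ω → (EuclideanSpace ℝ (Fin 3) →L[ℝ] EuclideanSpace ℝ (Fin 3)))
        (D2v : Ω → F),
        Measurable ρ → (∀ x, 0 ≤ ρ x ∧ ρ x ≤ ρs) →
        Integrable (fun x => ρ x * ‖v x‖ ^ 2) μ →
        Integrable (fun x => ρ x * ‖Dv x (v x)‖ ^ 2) μ →
        Integrable (fun x => ‖v x‖ ^ 6) μ →
        Integrable (fun x => ‖Dv x‖ ^ 2) μ →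
        Integrable (fun x => ‖Dv x‖ ^ 6) μ →
        Integrable (fun x => ‖D2v x‖ ^ 2) μ →
        ((∫ x, ‖v x‖ ^ 6 ∂μ) ^ ((1:ℝ)/6) ≤ CS * Real.sqrt (∫ x, ‖Dv x‖ ^ 2 ∂μ)) →
        ((∫ x, ‖Dv x‖ ^ 6 ∂μ) ^ ((1:ℝ)/6) ≤ CS * Real.sqrt (∫ x, ‖D2v x‖ ^ 2 ∂μ)) →
        ∀ ε > 0,
          (∫ x, ρ x * ‖Dv x (v x)‖ ^ 2 ∂μ)
            ≤ ε * (∫ x, ‖D2v x‖ ^ 2 ∂μ)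
              + C * ρs ^ 3 * ε⁻¹ ^ 3 * (∫ x, ρ x * ‖v x‖ ^ 2 ∂μ)
                * (∫ x, ‖Dv x‖ ^ 2 ∂μ) ^ 4 := by
  refine ⟨CS ^ 12, by positivity, ?_⟩
  intro Ω _ μ _ F _ ρ ρs v Dv D2v hρm hρb hA hI hS hB hT hH hSob1 hSob2 ε hε
  have hρ0 : ∀ x, 0 ≤ ρ x := fun x => (hρb x).1
  have hρs : ∀ x, ρ x ≤ ρs := fun x => (hρb x).2
  have hΩ : Nonempty Ω := by
    by_contra h
    rw [not_nonempty_iff] at h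
    have h1 : μ Set.univ = 1 := measure_univ
    rw [Set.univ_eq_empty_iff.mpr h, measure_empty] at h1
    exact zero_ne_one h1
  obtain ⟨x₀⟩ := hΩ
  have hρs0 : 0 ≤ ρs := le_trans (hρ0 x₀) (hρs x₀)
  -- abbreviations
  set A := ∫ x, ρ x * ‖v x‖ ^ 2 ∂μ with hAdef
  set S := ∫ x, ‖v x‖ ^ 6 ∂μ with hSdef
  set B := ∫ x, ‖Dv x‖ ^ 2 ∂μ with hBdef
  set T := ∫ x, ‖Dv x‖ ^ 6 ∂μ with hTdef
  set H := ∫ x, ‖D2v x‖ ^ 2 ∂μ with hHdef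
  have hA0 : 0 ≤ A := integral_nonneg fun x => mul_nonneg (hρ0 x) (by positivity)
  have hS0 : 0 ≤ S := integral_nonneg fun x => by positivity
  have hB0 : 0 ≤ B := integral_nonneg fun x => by positivity
  have hT0 : 0 ≤ T := integral_nonneg fun x => by positivity
  have hH0 : 0 ≤ H := integral_nonneg fun x => by positivity
  -- the two main factors
  set f : Ω → ℝ := fun x => ρ x * ‖v x‖ ^ 2 with hfdef
  set g : Ω → ℝ := fun x => ‖Dv x‖ ^ 2 with hgdef
  have hf0 : ∀ x, 0 ≤ f x := fun x => mul_nonneg (hρ0 x) (by positivity)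
  have hg0 : ∀ x, 0 ≤ g x := fun x => by positivity
  have hfm : AEStronglyMeasurable f μ := hA.aestronglyMeasurable
  have hgm : AEStronglyMeasurable g μ := hB.aestronglyMeasurable
  have hvm6 : AEStronglyMeasurable (fun x => ‖v x‖ ^ 6) μ := hS.aestronglyMeasurable
  -- integrability of f², g²
  have hf2 : Integrable (fun x => f x ^ 2) μ := by
    refine Integrable.mono' ((hA.const_mul ρs).add (hS.const_mul (ρs ^ 2)))
      (hfm.mul hfm |>.congr (ae_of_all _ fun x => (pow_two (f x)).symm)) (ae_of_all _ fun x => ?_)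
    have h1 : 0 ≤ f x := hf0 x
    rw [Real.norm_of_nonneg (by positivity)]
    simp only [hfdef, Pi.add_apply]
    have hv4 : ‖v x‖ ^ 4 ≤ ‖v x‖ ^ 2 + ‖v x‖ ^ 6 := by
      nlinarith [mul_nonneg (sq_nonneg ‖v x‖) (sq_nonneg (‖v x‖ ^ 2 - 1))]
    have t1 : ρ x * ρ x * ‖v x‖ ^ 4 ≤ ρs * ρ x * ‖v x‖ ^ 4 :=
      mul_le_mul_of_nonneg_right (mul_le_mul_of_nonneg_right (hρs x) (hρ0 x)) (by positivity)
    have t3 : ρ x * ‖v x‖ ^ 4 ≤ ρ x * ‖v x‖ ^ 2 + ρ x * ‖v x‖ ^ 6 := by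
      nlinarith [mul_le_mul_of_nonneg_left hv4 (hρ0 x)]
    have t4 : ρ x * ‖v x‖ ^ 6 ≤ ρs * ‖v x‖ ^ 6 :=
      mul_le_mul_of_nonneg_right (hρs x) (by positivity)
    nlinarith [t1, mul_le_mul_of_nonneg_left t3 hρs0, mul_le_mul_of_nonneg_left t4 hρs0]
  have hg2 : Integrable (fun x => g x ^ 2) μ := by
    refine Integrable.mono' (hB.add hT)
      (hgm.mul hgm |>.congr (ae_of_all _ fun x => (pow_two (g x)).symm)) (ae_of_all _ fun x => ?_)
    rw [Real.norm_of_nonneg (by positivity)]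
    simp only [hgdef, Pi.add_apply]
    nlinarith [mul_nonneg (sq_nonneg ‖Dv x‖) (sq_nonneg (‖Dv x‖ ^ 2 - 1))]
  -- Step 1 : I ≤ ∫ f g
  have hfg_int : Integrable (fun x => f x * g x) μ := by
    refine Integrable.mono' ((hf2.add hg2).div_const 2) (hfm.mul hgm) (ae_of_all _ fun x => ?_)
    rw [Real.norm_of_nonneg (mul_nonneg (hf0 x) (hg0 x))]
    simp only [Pi.add_apply]
    nlinarith [sq_nonneg (f x - g x)]
  have step1 : (∫ x, ρ x * ‖Dv x (v x)‖ ^ 2 ∂μ) ≤ ∫ x, f x * g x ∂μ := by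
    refine integral_mono hI hfg_int fun x => ?_
    have hop : ‖Dv x (v x)‖ ≤ ‖Dv x‖ * ‖v x‖ := (Dv x).le_opNorm (v x)
    have h1 : ‖Dv x (v x)‖ ^ 2 ≤ (‖Dv x‖ * ‖v x‖) ^ 2 :=
      pow_le_pow_left₀ (norm_nonneg _) hop 2
    simp only [hfdef, hgdef]
    nlinarith [mul_le_mul_of_nonneg_left h1 (hρ0 x)]
  -- Step 2 : Hölder
  have step2 : (∫ x, f x * g x ∂μ)
      ≤ Real.sqrt (∫ x, f x ^ 2 ∂μ) * Real.sqrt (∫ x, g x ^ 2 ∂μ) :=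
    holder22 hf0 hg0 hfm hgm hf2 hg2
  -- Step 3 : ∫ f² ≤ √A · √(ρs³ S)
  set f₁ : Ω → ℝ := fun x => Real.sqrt (ρ x * ‖v x‖ ^ 2) with hf₁def
  set g₁ : Ω → ℝ := fun x => ρ x * Real.sqrt (ρ x) * Real.sqrt (‖v x‖ ^ 6) with hg₁def
  have hf₁m : AEStronglyMeasurable f₁ μ := Real.continuous_sqrt.comp_aestronglyMeasurable hfm
  have hg₁m : AEStronglyMeasurable g₁ μ :=
    ((hρm.aestronglyMeasurable).mul
      (Real.continuous_sqrt.comp_aestronglyMeasurable hρm.aestronglyMeasurable)).mul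
      (Real.continuous_sqrt.comp_aestronglyMeasurable hvm6)
  have hf₁sq : ∀ x, f₁ x ^ 2 = f x := fun x => Real.sq_sqrt (hf0 x)
  have hg₁sq : ∀ x, g₁ x ^ 2 = ρ x ^ 3 * ‖v x‖ ^ 6 := by
    intro x
    simp only [hg₁def]
    rw [mul_pow, mul_pow, Real.sq_sqrt (hρ0 x), Real.sq_sqrt (by positivity)]
    ring
  have hf₁2 : Integrable (fun x => f₁ x ^ 2) μ := hA.congr (ae_of_all _ fun x => (hf₁sq x).symm)
  have hg₁2 : Integrable (fun x => g₁ x ^ 2) μ := by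
    refine Integrable.mono' (hS.const_mul (ρs ^ 3))
      (hg₁m.mul hg₁m |>.congr (ae_of_all _ fun x => (pow_two (g₁ x)).symm))
      (ae_of_all _ fun x => ?_)
    rw [Real.norm_of_nonneg (sq_nonneg _), hg₁sq x]
    have h1 : ρ x ^ 3 ≤ ρs ^ 3 := pow_le_pow_left₀ (hρ0 x) (hρs x) 3
    have : (0:ℝ) ≤ ‖v x‖ ^ 6 := by positivity
    nlinarith
  have hfg₁ : ∀ x, f₁ x * g₁ x = f x ^ 2 := by
    intro x
    simp only [hf₁def, hg₁def, hfdef]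
    rw [Real.sqrt_mul (hρ0 x), Real.sqrt_sq (norm_nonneg _),
      show ‖v x‖ ^ 6 = (‖v x‖ ^ 3) ^ 2 by ring, Real.sqrt_sq (by positivity)]
    have hss : Real.sqrt (ρ x) * Real.sqrt (ρ x) = ρ x := Real.mul_self_sqrt (hρ0 x)
    calc Real.sqrt (ρ x) * ‖v x‖ * (ρ x * Real.sqrt (ρ x) * ‖v x‖ ^ 3)
        = (Real.sqrt (ρ x) * Real.sqrt (ρ x)) * ρ x * ‖v x‖ ^ 4 := by ring
      _ = (ρ x * ‖v x‖ ^ 2) ^ 2 := by rw [hss]; ring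
  have step3 : (∫ x, f x ^ 2 ∂μ) ≤ Real.sqrt A * Real.sqrt (ρs ^ 3 * S) := by
    have e1 : (∫ x, f x ^ 2 ∂μ) = ∫ x, f₁ x * g₁ x ∂μ :=
      integral_congr_ae (ae_of_all _ fun x => (hfg₁ x).symm)
    have e2 : (∫ x, f₁ x ^ 2 ∂μ) = A := integral_congr_ae (ae_of_all _ fun x => hf₁sq x)
    have e3 : (∫ x, g₁ x ^ 2 ∂μ) ≤ ρs ^ 3 * S := by
      rw [hSdef, ← integral_const_mul]
      refine integral_mono hg₁2 (hS.const_mul _) fun x => ?_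
      rw [hg₁sq x]
      have h1 : ρ x ^ 3 ≤ ρs ^ 3 := pow_le_pow_left₀ (hρ0 x) (hρs x) 3
      have : (0:ℝ) ≤ ‖v x‖ ^ 6 := by positivity
      nlinarith
    calc (∫ x, f x ^ 2 ∂μ) = ∫ x, f₁ x * g₁ x ∂μ := e1
      _ ≤ Real.sqrt (∫ x, f₁ x ^ 2 ∂μ) * Real.sqrt (∫ x, g₁ x ^ 2 ∂μ) :=
          holder22 (fun x => Real.sqrt_nonneg _)
            (fun x => mul_nonneg (mul_nonneg (hρ0 x) (Real.sqrt_nonneg _)) (Real.sqrt_nonneg _))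
            hf₁m hg₁m hf₁2 hg₁2
      _ ≤ Real.sqrt A * Real.sqrt (ρs ^ 3 * S) := by
          rw [e2]
          exact mul_le_mul_of_nonneg_left (Real.sqrt_le_sqrt e3) (Real.sqrt_nonneg _)
  -- Step 4 : ∫ g² ≤ √B · √T
  set f₂ : Ω → ℝ := fun x => Real.sqrt (‖Dv x‖ ^ 2) with hf₂def
  set g₂ : Ω → ℝ := fun x => Real.sqrt (‖Dv x‖ ^ 6) with hg₂def
  have hf₂m : AEStronglyMeasurable f₂ μ :=
    Real.continuous_sqrt.comp_aestronglyMeasurable hB.aestronglyMeasurable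
  have hg₂m : AEStronglyMeasurable g₂ μ :=
    Real.continuous_sqrt.comp_aestronglyMeasurable hT.aestronglyMeasurable
  have hf₂2 : Integrable (fun x => f₂ x ^ 2) μ :=
    hB.congr (ae_of_all _ fun x => (Real.sq_sqrt (by positivity : (0:ℝ) ≤ ‖Dv x‖ ^ 2)).symm)
  have hg₂2 : Integrable (fun x => g₂ x ^ 2) μ :=
    hT.congr (ae_of_all _ fun x => (Real.sq_sqrt (by positivity : (0:ℝ) ≤ ‖Dv x‖ ^ 6)).symm)
  have step4 : (∫ x, g x ^ 2 ∂μ) ≤ Real.sqrt B * Real.sqrt T := by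
    have e1 : (∫ x, g x ^ 2 ∂μ) = ∫ x, f₂ x * g₂ x ∂μ := by
      refine integral_congr_ae (ae_of_all _ fun x => ?_)
      simp only [hf₂def, hg₂def, hgdef]
      rw [Real.sqrt_sq (norm_nonneg _),
        show ‖Dv x‖ ^ 6 = (‖Dv x‖ ^ 3) ^ 2 by ring, Real.sqrt_sq (by positivity)]
      ring
    have e2 : (∫ x, f₂ x ^ 2 ∂μ) = B :=
      integral_congr_ae (ae_of_all _ fun x => Real.sq_sqrt (by positivity))
    have e3 : (∫ x, g₂ x ^ 2 ∂μ) = T :=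
      integral_congr_ae (ae_of_all _ fun x => Real.sq_sqrt (by positivity))
    rw [e1, ← e2, ← e3]
    exact holder22 (fun x => Real.sqrt_nonneg _) (fun x => Real.sqrt_nonneg _)
      hf₂m hg₂m hf₂2 hg₂2
  -- algebra
  set a := Real.sqrt A with hadef
  set b := Real.sqrt B with hbdef
  set h := Real.sqrt H with hhdef
  set r := Real.sqrt ρs with hrdef
  have ha0 : 0 ≤ a := Real.sqrt_nonneg _
  have hb0 : 0 ≤ b := Real.sqrt_nonneg _
  have hh0 : 0 ≤ h := Real.sqrt_nonneg _
  have hr0 : 0 ≤ r := Real.sqrt_nonneg _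
  have ha2 : a ^ 2 = A := Real.sq_sqrt hA0
  have hb2 : b ^ 2 = B := Real.sq_sqrt hB0
  have hh2 : h ^ 2 = H := Real.sq_sqrt hH0
  have hr2 : r ^ 2 = ρs := Real.sq_sqrt hρs0
  obtain ⟨u, hu0, hu6, hu⟩ : ∃ u, 0 ≤ u ∧ u ^ 6 = S ∧ u ≤ CS * b := by
    refine ⟨S ^ ((1:ℝ)/6), Real.rpow_nonneg hS0 _, ?_, hSob1⟩
    rw [← Real.rpow_natCast (S ^ ((1:ℝ)/6)) 6, ← Real.rpow_mul hS0]
    norm_num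
  obtain ⟨w, hw0, hw6, hw⟩ : ∃ w, 0 ≤ w ∧ w ^ 6 = T ∧ w ≤ CS * h := by
    refine ⟨T ^ ((1:ℝ)/6), Real.rpow_nonneg hT0 _, ?_, hSob2⟩
    rw [← Real.rpow_natCast (T ^ ((1:ℝ)/6)) 6, ← Real.rpow_mul hT0]
    norm_num
  -- rewrite √(ρs³ S)
  have hsqrtS : Real.sqrt (ρs ^ 3 * S) = r ^ 3 * u ^ 3 := by
    have e : ρs ^ 3 * S = (r ^ 3 * u ^ 3) ^ 2 := by rw [← hr2, ← hu6]; ring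
    rw [e, Real.sqrt_sq (by positivity)]
  -- combine
  have main : (∫ x, ρ x * ‖Dv x (v x)‖ ^ 2 ∂μ)
      ≤ Real.sqrt ((a * (r ^ 3 * u ^ 3)) * (b * w ^ 3)) := by
    calc (∫ x, ρ x * ‖Dv x (v x)‖ ^ 2 ∂μ) ≤ ∫ x, f x * g x ∂μ := step1
      _ ≤ Real.sqrt (∫ x, f x ^ 2 ∂μ) * Real.sqrt (∫ x, g x ^ 2 ∂μ) := step2
      _ ≤ Real.sqrt (a * (r ^ 3 * u ^ 3)) * Real.sqrt (b * w ^ 3) := by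
          refine mul_le_mul (Real.sqrt_le_sqrt ?_) (Real.sqrt_le_sqrt ?_)
            (Real.sqrt_nonneg _) (Real.sqrt_nonneg _)
          · calc (∫ x, f x ^ 2 ∂μ) ≤ Real.sqrt A * Real.sqrt (ρs ^ 3 * S) := step3
              _ = a * (r ^ 3 * u ^ 3) := by rw [hsqrtS]
          · calc (∫ x, g x ^ 2 ∂μ) ≤ Real.sqrt B * Real.sqrt T := step4
              _ = b * w ^ 3 := by
                  rw [show T = (w ^ 3) ^ 2 by rw [← hw6]; ring, Real.sqrt_sq (by positivity)]
      _ = Real.sqrt ((a * (r ^ 3 * u ^ 3)) * (b * w ^ 3)) :=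
          (Real.sqrt_mul (by positivity) _).symm
  -- bound u, w by Sobolev
  set M := CS ^ 6 * a * r ^ 3 * b ^ 4 with hMdef
  have hM0 : 0 ≤ M := by positivity
  have main2 : (∫ x, ρ x * ‖Dv x (v x)‖ ^ 2 ∂μ) ≤ Real.sqrt (M * h ^ 3) := by
    refine le_trans main (Real.sqrt_le_sqrt ?_)
    have h1 : u ^ 3 ≤ (CS * b) ^ 3 := pow_le_pow_left₀ hu0 hu 3
    have h2 : w ^ 3 ≤ (CS * h) ^ 3 := pow_le_pow_left₀ hw0 hw 3
    calc (a * (r ^ 3 * u ^ 3)) * (b * w ^ 3)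
        ≤ (a * (r ^ 3 * (CS * b) ^ 3)) * (b * (CS * h) ^ 3) := by
          refine mul_le_mul ?_ ?_ (by positivity) (by positivity)
          · exact mul_le_mul_of_nonneg_left (mul_le_mul_of_nonneg_left h1 (by positivity)) ha0
          · exact mul_le_mul_of_nonneg_left h2 hb0
      _ = M * h ^ 3 := by rw [hMdef]; ring
  -- Young step
  have hsplit : Real.sqrt (M * h ^ 3) = Real.sqrt M * Real.sqrt h ^ 3 := by
    rw [Real.sqrt_mul hM0, show h ^ 3 = (Real.sqrt h ^ 2) ^ 3 by rw [Real.sq_sqrt hh0]]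
    rw [show (Real.sqrt h ^ 2) ^ 3 = (Real.sqrt h ^ 3) ^ 2 by ring, Real.sqrt_sq (by positivity)]
  have young := young_aux (Real.sqrt_nonneg M) (Real.sqrt_nonneg h) hε
  have hfin : Real.sqrt M * Real.sqrt h ^ 3 ≤ ε * H + ε⁻¹ ^ 3 * M ^ 2 := by
    refine le_trans young ?_
    have e1 : Real.sqrt h ^ 4 = H := by
      rw [show Real.sqrt h ^ 4 = (Real.sqrt h ^ 2) ^ 2 by ring, Real.sq_sqrt hh0, hh2]
    have e2 : Real.sqrt M ^ 4 = M ^ 2 := by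
      rw [show Real.sqrt M ^ 4 = (Real.sqrt M ^ 2) ^ 2 by ring, Real.sq_sqrt hM0]
    rw [e1, e2]
  have hM2 : M ^ 2 = CS ^ 12 * ρs ^ 3 * A * B ^ 4 := by
    rw [hMdef, ← ha2, ← hb2, ← hr2]; ring
  calc (∫ x, ρ x * ‖Dv x (v x)‖ ^ 2 ∂μ) ≤ Real.sqrt (M * h ^ 3) := main2
    _ = Real.sqrt M * Real.sqrt h ^ 3 := hsplit
    _ ≤ ε * H + ε⁻¹ ^ 3 * M ^ 2 := hfin
    _ = ε * H + CS ^ 12 * ρs ^ 3 * ε⁻¹ ^ 3 * A * B ^ 4 := by rw [hM2]; ring
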